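/- Let a < b be real numbers and let v : ℝ → ℝ be continuously differentiable on [a, b]. Then v(a)² ≤ (b − a)^{−1} ∫_a^b v(s)² ds + 2 · (∫_a^b v(s)² ds)^{1/2} · (∫_a^b v'(s)² ds)^{1/2}, and the same bound holds with v(a)² replaced by v(b)². -/

import Mathlib

open MeasureTheory intervalIntegral

/-- Multiplicative trace inequality in one dimension (Section 3.2): for a
function `v` continuously differentiable on `[a, b]` (with derivative `v'`),
`v(a)² ≤ (b − a)⁻¹ ∫_a^b v² + 2 (∫_a^b v²)^{1/2} (∫_a^b v'²)^{1/2}`,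
and the same bound holds for `v(b)²`. -/
theorem stmt9 (a b : ℝ) (hab : a < b) (v v' : ℝ → ℝ)
    (hderiv : ∀ s ∈ Set.Icc a b, HasDerivAt v (v' s) s)
    (hcont : ContinuousOn v' (Set.Icc a b)) :
    (v a) ^ 2 ≤ (b - a)⁻¹ * (∫ s in a..b, (v s) ^ 2) +
        2 * Real.sqrt (∫ s in a..b, (v s) ^ 2) * Real.sqrt (∫ s in a..b, (v' s) ^ 2) ∧
      (v b) ^ 2 ≤ (b - a)⁻¹ * (∫ s in a..b, (v s) ^ 2) +
        2 * Real.sqrt (∫ s in a..b, (v s) ^ 2) * Real.sqrt (∫ s in a..b, (v' s) ^ 2) := by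
  have hab' : a ≤ b := hab.le
  have hvc : ContinuousOn v (Set.Icc a b) := fun x hx =>
    (hderiv x hx).continuousAt.continuousWithinAt
  have hcontf : ContinuousOn (fun s => 2 * v s * v' s) (Set.Icc a b) :=
    ((continuousOn_const.mul hvc).mul hcont)
  have hcontabs : ContinuousOn (fun s => |2 * v s * v' s|) (Set.Icc a b) := hcontf.abs
  have hcont2 : ContinuousOn (fun s => v s ^ 2) (Set.Icc a b) := hvc.pow 2
  have huIcc : Set.uIcc a b = Set.Icc a b := Set.uIcc_of_le hab'
  have hint2 : IntervalIntegrable (fun s => v s ^ 2) volume a b :=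
    (huIcc ▸ hcont2).intervalIntegrable
  have hintabs : IntervalIntegrable (fun s => |2 * v s * v' s|) volume a b :=
    (huIcc ▸ hcontabs).intervalIntegrable
  set C : ℝ := ∫ s in a..b, |2 * v s * v' s| with hC
  -- FTC on subintervals
  have ftc : ∀ c ∈ Set.Icc a b, ∀ d ∈ Set.Icc a b, c ≤ d →
      (∫ s in c..d, 2 * v s * v' s) = v d ^ 2 - v c ^ 2 := by
    intro c hc d hd hcd
    have hsub : Set.uIcc c d ⊆ Set.Icc a b := by
      rw [Set.uIcc_of_le hcd]
      exact Set.Icc_subset_Icc hc.1 hd.2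
    refine integral_eq_sub_of_hasDerivAt (f := fun s => v s ^ 2) (fun s hs => ?_) ?_
    · have h := (hderiv s (hsub hs)).fun_pow 2
      simpa [mul_comm, mul_assoc, mul_left_comm] using h
    · exact ContinuousOn.intervalIntegrable (hcontf.mono hsub)
  -- bound on |∫ s in c..d| by C for a ≤ c ≤ d ≤ b
  have hbound : ∀ c ∈ Set.Icc a b, ∀ d ∈ Set.Icc a b, c ≤ d →
      |∫ s in c..d, 2 * v s * v' s| ≤ C := by
    intro c hc d hd hcd
    have h1 : |∫ s in c..d, 2 * v s * v' s| ≤ ∫ s in c..d, |2 * v s * v' s| :=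
      abs_integral_le_integral_abs hcd
    have h2 : (∫ s in c..d, |2 * v s * v' s|) ≤ C := by
      refine integral_mono_interval hc.1 hcd hd.2 ?_ hintabs
      exact Filter.Eventually.of_forall fun x => abs_nonneg _
    linarith
  have key : ∀ t ∈ Set.Icc a b, v a ^ 2 ≤ v t ^ 2 + C ∧ v b ^ 2 ≤ v t ^ 2 + C := by
    intro t ht
    have h1 := ftc a (Set.left_mem_Icc.2 hab') t ht ht.1
    have h2 := ftc t ht b (Set.right_mem_Icc.2 hab') ht.2
    have b1 := hbound a (Set.left_mem_Icc.2 hab') t ht ht.1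
    have b2 := hbound t ht b (Set.right_mem_Icc.2 hab') ht.2
    constructor
    · nlinarith [abs_nonneg (∫ s in a..t, 2 * v s * v' s),
        le_abs_self (∫ s in a..t, 2 * v s * v' s),
        neg_abs_le (∫ s in a..t, 2 * v s * v' s)]
    · nlinarith [le_abs_self (∫ s in t..b, 2 * v s * v' s),
        neg_abs_le (∫ s in t..b, 2 * v s * v' s)]
  -- averaging
  have havg : ∀ (x : ℝ), (∀ t ∈ Set.Icc a b, x ^ 2 ≤ v t ^ 2 + C) →
      x ^ 2 ≤ (b - a)⁻¹ * (∫ s in a..b, v s ^ 2) + C := by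
    intro x hx
    have hmono : (∫ t in a..b, x ^ 2) ≤ ∫ t in a..b, (v t ^ 2 + C) := by
      refine integral_mono_on hab' intervalIntegrable_const (hint2.add intervalIntegrable_const) hx
    rw [intervalIntegral.integral_const, integral_add hint2 intervalIntegrable_const,
      intervalIntegral.integral_const, smul_eq_mul, smul_eq_mul] at hmono
    have hba : (0:ℝ) < b - a := by linarith
    have h := mul_le_mul_of_nonneg_left hmono (inv_pos.2 hba).le
    have hc : (b - a)⁻¹ * (b - a) = 1 := inv_mul_cancel₀ hba.ne'
    calc x ^ 2 = (b - a)⁻¹ * ((b - a) * x ^ 2) := by rw [← mul_assoc, hc, one_mul]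
      _ ≤ (b - a)⁻¹ * ((∫ s in a..b, v s ^ 2) + (b - a) * C) := h
      _ = (b - a)⁻¹ * (∫ s in a..b, v s ^ 2) + (b - a)⁻¹ * (b - a) * C := by ring
      _ = (b - a)⁻¹ * (∫ s in a..b, v s ^ 2) + C := by rw [hc, one_mul]
  -- Cauchy-Schwarz
  have hint2' : IntervalIntegrable (fun s => v' s ^ 2) volume a b :=
    (huIcc ▸ (hcont.pow 2)).intervalIntegrable
  have hCS : C ≤ 2 * Real.sqrt (∫ s in a..b, v s ^ 2) * Real.sqrt (∫ s in a..b, v' s ^ 2) := by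
    set μ := volume.restrict (Set.Ioc a b) with hμ
    have hmv : AEStronglyMeasurable v μ :=
      (hvc.mono Set.Ioc_subset_Icc_self).aestronglyMeasurable measurableSet_Ioc
    have hmv' : AEStronglyMeasurable v' μ :=
      (hcont.mono Set.Ioc_subset_Icc_self).aestronglyMeasurable measurableSet_Ioc
    have hv2 : Integrable (fun s => v s ^ 2) μ := hint2.1
    have hv'2 : Integrable (fun s => v' s ^ 2) μ := hint2'.1
    have hL2v : MemLp v (ENNReal.ofReal 2) μ := by
      rw [show ENNReal.ofReal 2 = 2 by norm_num]
      exact (memLp_two_iff_integrable_sq hmv).2 hv2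
    have hL2v' : MemLp v' (ENNReal.ofReal 2) μ := by
      rw [show ENNReal.ofReal 2 = 2 by norm_num]
      exact (memLp_two_iff_integrable_sq hmv').2 hv'2
    have hpq : Real.HolderConjugate 2 2 := Real.HolderConjugate.two_two
    have H := MeasureTheory.integral_mul_norm_le_Lp_mul_Lq hpq hL2v hL2v'
    have habs : ∀ x : ℝ, ‖x‖ ^ (2:ℝ) = x ^ 2 := fun x => by
      rw [show (2:ℝ) = ((2:ℕ):ℝ) by norm_num, Real.rpow_natCast, Real.norm_eq_abs, sq_abs]
    simp only [habs] at H
    have e1 : (∫ s in a..b, v s ^ 2) = ∫ s, v s ^ 2 ∂μ :=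
      intervalIntegral.integral_of_le hab'
    have e2 : (∫ s in a..b, v' s ^ 2) = ∫ s, v' s ^ 2 ∂μ :=
      intervalIntegral.integral_of_le hab'
    have e3 : C = 2 * ∫ s, ‖v s‖ * ‖v' s‖ ∂μ := by
      rw [hC, intervalIntegral.integral_of_le hab', ← MeasureTheory.integral_const_mul]
      refine integral_congr_ae (Filter.Eventually.of_forall fun x => ?_)
      simp [abs_mul, Real.norm_eq_abs, mul_assoc]
    rw [e1, e2, e3, Real.sqrt_eq_rpow, Real.sqrt_eq_rpow, mul_assoc]
    have h2 : (0:ℝ) ≤ 2 := by norm_num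
    exact mul_le_mul_of_nonneg_left H h2
  have key2 : ∀ x, (∀ t ∈ Set.Icc a b, x ^ 2 ≤ v t ^ 2 + C) →
      x ^ 2 ≤ (b - a)⁻¹ * (∫ s in a..b, v s ^ 2) +
        2 * Real.sqrt (∫ s in a..b, v s ^ 2) * Real.sqrt (∫ s in a..b, v' s ^ 2) := by
    intro x hx
    have := havg x hx
    linarith
  exact ⟨key2 _ fun t ht => (key t ht).1, key2 _ fun t ht => (key t ht).2⟩
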